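/- If the unit-zero divisor graph G_UZ(R) of a finite commutative ring R is a complete bipartite graph, then R is a local ring. -/

import Mathlib

open SimpleGraph

/-- The unit-zero divisor graph of a commutative ring: distinct `u`, `v` are adjacent
iff `u + v` is a unit and `u * v` is a zero divisor. -/
def GUZ (R : Type*) [CommRing R] : SimpleGraph R where
  Adj u v := u ≠ v ∧ IsUnit (u + v) ∧ ∃ y : R, y ≠ 0 ∧ u * v * y = 0
  symm := by
    constructor
    intro u v h
    refine ⟨h.1.symm, ?_, ?_⟩
    · rw [add_comm]; exact h.2.1
    · rw [mul_comm]; exact h.2.2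
  loopless := by constructor; intro u h; exact h.1 rfl

/-- In a finite commutative ring, a nonzero nonunit is a zero divisor. -/
lemma nonunit_zero_divisor {R : Type*} [CommRing R] [Fintype R] {a : R}
    (ha : ¬ IsUnit a) : ∃ y : R, y ≠ 0 ∧ a * y = 0 := by
  by_cases h : Function.Injective (fun x : R => a * x)
  · have hs : Function.Surjective (fun x : R => a * x) :=
      (Finite.injective_iff_surjective).mp h
    obtain ⟨x, hx⟩ := hs 1
    exact absurd (isUnit_iff_exists_inv.mpr ⟨x, hx⟩) ha
  · rw [Function.not_injective_iff] at h
    obtain ⟨x, y, hxy, hne⟩ := h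
    refine ⟨x - y, sub_ne_zero.mpr hne, ?_⟩
    rw [mul_sub, hxy, sub_self]

/-- If `G_UZ(R)` is a complete bipartite graph (the vertex set splits into two nonempty
parts such that distinct vertices are adjacent iff they lie in different parts), then
`R` is a local ring. -/
theorem stmt5 (R : Type*) [CommRing R] [Fintype R]
    (M N : Set R) (hM : M.Nonempty) (hN : N.Nonempty)
    (hdisj : Disjoint M N) (hcover : M ∪ N = Set.univ)
    (hadj : ∀ u v : R, u ≠ v →
      ((GUZ R).Adj u v ↔ (u ∈ M ∧ v ∈ N) ∨ (u ∈ N ∧ v ∈ M))) :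
    IsLocalRing R := by
  obtain ⟨m, hm⟩ := hM
  obtain ⟨n, hn⟩ := hN
  have hmn : m ≠ n := fun h => hdisj.ne_of_mem hm hn h
  have : Nontrivial R := ⟨m, n, hmn⟩
  -- key: sum of two nonunits is a nonunit
  have key : ∀ a b : R, ¬ IsUnit a → ¬ IsUnit b → ¬ IsUnit (a + b) := by
    intro a b ha hb hab
    have ha0 : a ≠ 0 := by rintro rfl; simp at hab; exact hb hab
    have hb0 : b ≠ 0 := by rintro rfl; simp at hab; exact ha hab
    have hne : a ≠ b := by
      rintro rfl
      have : IsUnit (a * 2) := by rwa [mul_two]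
      exact ha (isUnit_of_mul_isUnit_left this)
    obtain ⟨y, hy0, hy⟩ := nonunit_zero_divisor ha
    have hadjab : (GUZ R).Adj a b :=
      ⟨hne, hab, y, hy0, by rw [mul_comm a b, mul_assoc, hy, mul_zero]⟩
    have h0 : (0 : R) ∈ M ∪ N := hcover ▸ Set.mem_univ 0
    rcases (hadj a b hne).mp hadjab with ⟨haM, hbN⟩ | ⟨haN, hbM⟩
    · rcases h0 with h0M | h0N
      · have : (GUZ R).Adj 0 b := (hadj 0 b (Ne.symm hb0)).mpr (Or.inl ⟨h0M, hbN⟩)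
        exact hb (by simpa using this.2.1)
      · have : (GUZ R).Adj a 0 := (hadj a 0 ha0).mpr (Or.inl ⟨haM, h0N⟩)
        exact ha (by simpa using this.2.1)
    · rcases h0 with h0M | h0N
      · have : (GUZ R).Adj 0 a := (hadj 0 a (Ne.symm ha0)).mpr (Or.inl ⟨h0M, haN⟩)
        exact ha (by simpa using this.2.1)
      · have : (GUZ R).Adj b 0 := (hadj b 0 hb0).mpr (Or.inl ⟨hbM, h0N⟩)
        exact hb (by simpa using this.2.1)
  refine IsLocalRing.of_isUnit_or_isUnit_one_sub_self ?_
  intro a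
  by_contra h
  push_neg at h
  exact key a (1 - a) h.1 h.2 (by simp)
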